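/- arXiv:1806.02620 — 4 statements merged into one kernel-verified Lean document; each statement's English description precedes it below -/
import Mathlib

section
/- Let b > 0 and let φ : (0,b) → ℝ be twice differentiable with φ(s) − s·φ'(s) + (b² − s²)·φ''(s) = 0 for all s ∈ (0,b). Then there exist constants c₁, c₂ such that φ(s) = c₁·s + c₂·√(b² − s²) for all s ∈ (0,b). -/
open Set

lemma const_of_deriv0 (a b : ℝ) (f : ℝ → ℝ)
    (hf : ∀ x ∈ Ioo a b, HasDerivAt f 0 x) :
    ∀ x ∈ Ioo a b, ∀ y ∈ Ioo a b, f x = f y := by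
  intro x hx y hy
  refine (convex_Ioo a b).is_const_of_fderivWithin_eq_zero
    (fun z hz => ((hf z hz).differentiableAt).differentiableWithinAt) (fun z hz => ?_) hx hy
  rw [fderivWithin_eq_fderiv (isOpen_Ioo.uniqueDiffOn z hz) (hf z hz).differentiableAt,
    (hf z hz).hasFDerivAt.fderiv]
  ext
  simp

/-- Every twice-differentiable solution of `φ − sφ' + (b²−s²)φ'' = 0` on `(0,b)`
is of the form `φ(s) = c₁ s + c₂ √(b²−s²)`. -/
theorem stmt2 (b : ℝ) (hb : 0 < b) (φ φ' φ'' : ℝ → ℝ)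
    (hd1 : ∀ s ∈ Ioo 0 b, HasDerivAt φ (φ' s) s)
    (hd2 : ∀ s ∈ Ioo 0 b, HasDerivAt φ' (φ'' s) s)
    (hode : ∀ s ∈ Ioo 0 b, φ s - s * φ' s + (b ^ 2 - s ^ 2) * φ'' s = 0) :
    ∃ c₁ c₂ : ℝ, ∀ s ∈ Ioo 0 b, φ s = c₁ * s + c₂ * Real.sqrt (b ^ 2 - s ^ 2) := by
  -- positivity of b² - s² on the interval
  have hpos : ∀ s ∈ Ioo 0 b, 0 < b ^ 2 - s ^ 2 := by
    intro s hs
    nlinarith [hs.1, hs.2]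
  set v : ℝ → ℝ := fun s => Real.sqrt (b ^ 2 - s ^ 2) with hv
  have hvpos : ∀ s ∈ Ioo 0 b, 0 < v s := fun s hs => Real.sqrt_pos.2 (hpos s hs)
  have hvsq : ∀ s ∈ Ioo 0 b, v s * v s = b ^ 2 - s ^ 2 := fun s hs =>
    Real.mul_self_sqrt (hpos s hs).le
  have hvd : ∀ s ∈ Ioo 0 b, HasDerivAt v (-s / v s) s := by
    intro s hs
    have h1 : HasDerivAt (fun s : ℝ => b ^ 2 - s ^ 2) (-(2 * s)) s := by
      simpa using ((hasDerivAt_pow 2 s).const_sub (b ^ 2))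
    have := (Real.hasDerivAt_sqrt (ne_of_gt (hpos s hs))).comp s h1
    refine this.congr_deriv ?_
    field_simp
    ring
  -- g = (φ - sφ') v  is constant
  set g : ℝ → ℝ := fun s => (φ s - s * φ' s) * v s with hg
  have hgd : ∀ s ∈ Ioo 0 b, HasDerivAt g 0 s := by
    intro s hs
    have h1 : HasDerivAt (fun s => φ s - s * φ' s) (φ' s - (1 * φ' s + s * φ'' s)) s :=
      (hd1 s hs).sub ((hasDerivAt_id s).mul (hd2 s hs))
    have h2 := h1.mul (hvd s hs)
    refine h2.congr_deriv ?_
    have hv0 := (hvpos s hs).ne'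
    have key : φ s - s * φ' s = -((b ^ 2 - s ^ 2) * φ'' s) := by linarith [hode s hs]
    rw [key]
    field_simp
    linear_combination (-(s * φ'' s)) * hvsq s hs
  -- h = -sφ - (b²-s²)φ' is constant
  set h : ℝ → ℝ := fun s => -s * φ s - (b ^ 2 - s ^ 2) * φ' s with hh
  have hhd : ∀ s ∈ Ioo 0 b, HasDerivAt h 0 s := by
    intro s hs
    have h1 : HasDerivAt (fun s : ℝ => -s) (-1) s := (hasDerivAt_id s).neg
    have h2 : HasDerivAt (fun s : ℝ => b ^ 2 - s ^ 2) (-(2 * s)) s := by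
      simpa using ((hasDerivAt_pow 2 s).const_sub (b ^ 2))
    have h3 := (h1.mul (hd1 s hs)).sub (h2.mul (hd2 s hs))
    refine h3.congr_deriv ?_
    linear_combination (-1 : ℝ) * hode s hs
  -- evaluate at midpoint
  have hm : b / 2 ∈ Ioo 0 b := ⟨by linarith, by linarith⟩
  obtain ⟨k₁, hk₁⟩ : ∃ k, ∀ s ∈ Ioo 0 b, h s = k :=
    ⟨h (b / 2), fun s hs => const_of_deriv0 0 b h hhd s hs _ hm⟩
  obtain ⟨k₂, hk₂⟩ : ∃ k, ∀ s ∈ Ioo 0 b, g s = k :=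
    ⟨g (b / 2), fun s hs => const_of_deriv0 0 b g hgd s hs _ hm⟩
  refine ⟨-k₁ / b ^ 2, k₂ / b ^ 2, fun s hs => ?_⟩
  have hgc : g s = k₂ := hk₂ s hs
  have hhc : h s = k₁ := hk₁ s hs
  have hb2 : (b : ℝ) ^ 2 ≠ 0 := by positivity
  have hsq : Real.sqrt (b ^ 2 - s ^ 2) * Real.sqrt (b ^ 2 - s ^ 2) = b ^ 2 - s ^ 2 :=
    Real.mul_self_sqrt (hpos s hs).le
  simp only [hg, hh, hv] at hgc hhc
  have key : b ^ 2 * φ s = Real.sqrt (b ^ 2 - s ^ 2) * k₂ - s * k₁ := by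
    linear_combination Real.sqrt (b ^ 2 - s ^ 2) * hgc - s * hhc - (φ s - s * φ' s) * hsq
  field_simp
  linear_combination key
end

section
/- Let b > 0, c a constant with c·b² ≠ 0, and let Q(s) = (c(b² − s²) − 1)/s on an interval where s > 0 and 1 + sQ(s) = c(b² − s²) ≠ 0. Then Q(s)/(1 + sQ(s)) = 1/s − 1/(c·s·(b² − s²)), and consequently the function φ(s) = c₃·s^((cb²−1)/(cb²))·(cb² − cs²)^(1/(2cb²)) satisfies φ'(s)/φ(s) = Q(s)/(1 + sQ(s)) on that interval (for any constant c₃ > 0). -/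
open Set

/-- For `Q(s) = (c(b²−s²) − 1)/s` on an open interval where `0 < s < b` and
`c(b²−s²) > 0` (with `cb² ≠ 0`), one has `Q/(1+sQ) = 1/s − 1/(cs(b²−s²))`, and the
function `φ(s) = c₃ s^((cb²−1)/(cb²)) (cb²−cs²)^(1/(2cb²))` (for `c₃ > 0`)
satisfies `φ'/φ = Q/(1+sQ)` there. -/
theorem stmt8 (b c c₃ : ℝ) (hb : 0 < b) (hc : c * b ^ 2 ≠ 0) (hc₃ : 0 < c₃)
    (I : Set ℝ) (hIopen : IsOpen I)
    (hI : ∀ s ∈ I, 0 < s ∧ s < b ∧ 0 < c * (b ^ 2 - s ^ 2))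
    (Q : ℝ → ℝ) (hQ : ∀ s, Q s = (c * (b ^ 2 - s ^ 2) - 1) / s)
    (φ : ℝ → ℝ)
    (hφ : ∀ s, φ s = c₃ * s ^ ((c * b ^ 2 - 1) / (c * b ^ 2))
        * (c * b ^ 2 - c * s ^ 2) ^ (1 / (2 * c * b ^ 2))) :
    ∀ s ∈ I,
      Q s / (1 + s * Q s) = 1 / s - 1 / (c * s * (b ^ 2 - s ^ 2)) ∧
      deriv φ s / φ s = Q s / (1 + s * Q s) := by
  intro s hs
  obtain ⟨hs0, hsb, hpos⟩ := hI s hs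
  have hsne : s ≠ 0 := ne_of_gt hs0
  have hcne : c ≠ 0 := by
    intro h; exact hc (by rw [h]; ring)
  have hbs : (0:ℝ) < b ^ 2 - s ^ 2 := by nlinarith
  have hbsne : b ^ 2 - s ^ 2 ≠ 0 := ne_of_gt hbs
  have hg : (0:ℝ) < c * b ^ 2 - c * s ^ 2 := by nlinarith
  have hgne : c * b ^ 2 - c * s ^ 2 ≠ 0 := ne_of_gt hg
  have hden : 1 + s * Q s = c * (b ^ 2 - s ^ 2) := by
    rw [hQ]; field_simp; ring
  have hpart1 : Q s / (1 + s * Q s) = 1 / s - 1 / (c * s * (b ^ 2 - s ^ 2)) := by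
    rw [hden, hQ]
    field_simp
  refine ⟨hpart1, ?_⟩
  set p : ℝ := (c * b ^ 2 - 1) / (c * b ^ 2) with hp
  set q : ℝ := 1 / (2 * c * b ^ 2) with hq
  have hfun : φ = fun s : ℝ => c₃ * (s ^ p * (c * b ^ 2 - c * s ^ 2) ^ q) := by
    funext t; rw [hφ]; ring
  have hgder : HasDerivAt (fun t : ℝ => c * b ^ 2 - c * t ^ 2) (-(2 * c * s)) s := by
    have h := ((hasDerivAt_pow 2 s).const_mul c).const_sub (c * b ^ 2)
    refine h.congr_deriv ?_
    simp; ring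
  have h2 : HasDerivAt (fun t : ℝ => (c * b ^ 2 - c * t ^ 2) ^ q)
      (-(2 * c * s) * q * (c * b ^ 2 - c * s ^ 2) ^ (q - 1)) s :=
    hgder.rpow_const (Or.inl hgne)
  have h1' : HasDerivAt (fun t : ℝ => t ^ p) (p * s ^ (p - 1)) s :=
    Real.hasDerivAt_rpow_const (Or.inl hsne)
  have hφd : HasDerivAt φ
      (c₃ * (p * s ^ (p - 1) * (c * b ^ 2 - c * s ^ 2) ^ q
        + s ^ p * (-(2 * c * s) * q * (c * b ^ 2 - c * s ^ 2) ^ (q - 1)))) s := by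
    rw [hfun]
    exact (h1'.mul h2).const_mul c₃
  rw [hφd.deriv, hpart1, hφ]
  have hA : (0:ℝ) < s ^ p := Real.rpow_pos_of_pos hs0 p
  have hB : (0:ℝ) < (c * b ^ 2 - c * s ^ 2) ^ q := Real.rpow_pos_of_pos hg q
  have hsp1 : s ^ (p - 1) = s ^ p / s := by
    rw [Real.rpow_sub hs0, Real.rpow_one]
  have hgq1 : (c * b ^ 2 - c * s ^ 2) ^ (q - 1)
      = (c * b ^ 2 - c * s ^ 2) ^ q / (c * b ^ 2 - c * s ^ 2) := by
    rw [Real.rpow_sub hg, Real.rpow_one]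
  rw [hsp1, hgq1, hp, hq]
  field_simp
  ring
end

section
/- Let b > 0, c₃ > 0, and φ(s) = c₃·s^((cb²−1)/(cb²))·(cb² − cs²)^(1/(2cb²)) on an interval where 0 < s < b and c(b²−s²) > 0, with cb² ≠ 0. Then Q(s) := φ'(s)/(φ(s) − sφ'(s)) satisfies the linear ODE Q'(s) + (1/s + 2s/(b²−s²))Q(s) = −2/(b²−s²). -/
open Set

/-- Shen's Berwald-class function `φ(s) = c₃ s^((cb²−1)/(cb²)) (cb²−cs²)^(1/(2cb²))`
has `Q = φ'/(φ − sφ')` satisfying the T-condition ODE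
`Q' + (1/s + 2s/(b²−s²))Q = −2/(b²−s²)`. -/
theorem stmt9 (b c c₃ : ℝ) (hb : 0 < b) (hc : c * b ^ 2 ≠ 0) (hc₃ : 0 < c₃)
    (I : Set ℝ) (hIopen : IsOpen I)
    (hI : ∀ s ∈ I, 0 < s ∧ s < b ∧ 0 < c * (b ^ 2 - s ^ 2))
    (φ : ℝ → ℝ)
    (hφ : ∀ s, φ s = c₃ * s ^ ((c * b ^ 2 - 1) / (c * b ^ 2))
        * (c * b ^ 2 - c * s ^ 2) ^ (1 / (2 * c * b ^ 2)))
    (Q : ℝ → ℝ) (hQ : ∀ s, Q s = deriv φ s / (φ s - s * deriv φ s)) :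
    ∀ s ∈ I,
      deriv Q s + (1 / s + 2 * s / (b ^ 2 - s ^ 2)) * Q s = -2 / (b ^ 2 - s ^ 2) := by
  intro s hs
  obtain ⟨hs0, hsb, hcs⟩ := hI s hs
  have hb2 : (0:ℝ) < b ^ 2 := by positivity
  have hsb2 : 0 < b ^ 2 - s ^ 2 := by nlinarith
  have hcpos : 0 < c := by nlinarith
  have hφfun : φ = fun x => c₃ * x ^ ((c * b ^ 2 - 1) / (c * b ^ 2))
      * (c * b ^ 2 - c * x ^ 2) ^ (1 / (2 * c * b ^ 2)) := funext hφ
  set α := (c * b ^ 2 - 1) / (c * b ^ 2) with hαdef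
  set β := (1 : ℝ) / (2 * c * b ^ 2) with hβdef
  -- key: Q agrees with the rational function g on I
  have key : ∀ t ∈ I, Q t = (c * b ^ 2 - 1) / t - c * b ^ 2 * t / b ^ 2 := by
    intro t ht
    obtain ⟨ht0, htb, hct⟩ := hI t ht
    have htb2 : 0 < b ^ 2 - t ^ 2 := by nlinarith
    have hbase : 0 < c * b ^ 2 - c * t ^ 2 := by nlinarith
    have hA : HasDerivAt (fun x : ℝ => x ^ α) (α * t ^ (α - 1)) t :=
      Real.hasDerivAt_rpow_const (Or.inl ht0.ne')
    have hin : HasDerivAt (fun x : ℝ => c * b ^ 2 - c * x ^ 2) (-(c * (2 * t))) t := by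
      simpa using ((hasDerivAt_pow 2 t).const_mul c).const_sub (c * b ^ 2)
    have hB := hin.rpow_const (p := β) (Or.inl hbase.ne')
    have hd : HasDerivAt φ
        ((c₃ * (α * t ^ (α - 1))) * (c * b ^ 2 - c * t ^ 2) ^ β
          + (c₃ * t ^ α) * (-(c * (2 * t)) * β * (c * b ^ 2 - c * t ^ 2) ^ (β - 1))) t := by
      rw [hφfun]
      exact (hA.const_mul c₃).mul hB
    have hderiv := hd.deriv
    have hA1 : t ^ (α - 1) = t ^ α / t := by
      rw [Real.rpow_sub ht0, Real.rpow_one]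
    have hB1 : (c * b ^ 2 - c * t ^ 2) ^ (β - 1)
        = (c * b ^ 2 - c * t ^ 2) ^ β / (c * b ^ 2 - c * t ^ 2) := by
      rw [Real.rpow_sub hbase, Real.rpow_one]
    have hApos : 0 < t ^ α := Real.rpow_pos_of_pos ht0 _
    have hBpos : 0 < (c * b ^ 2 - c * t ^ 2) ^ β := Real.rpow_pos_of_pos hbase _
    set A := t ^ α with hAdef
    set B := (c * b ^ 2 - c * t ^ 2) ^ β with hBdef
    rw [hA1, hB1] at hderiv
    have hk0 : c * b ^ 2 ≠ 0 := hc
    have h2k0 : 2 * c * b ^ 2 ≠ 0 := by positivity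
    have hden : φ t - t * deriv φ t
        = c₃ * A * B * b ^ 2 / ((c * b ^ 2) * (b ^ 2 - t ^ 2)) := by
      rw [hderiv, hφ t, hαdef, hβdef]
      rw [← hAdef, ← hBdef]
      field_simp
      ring
    have hdenne : φ t - t * deriv φ t ≠ 0 := by
      rw [hden]; positivity
    rw [hQ, hden, hderiv]
    rw [hαdef, hβdef]
    field_simp
    ring
  -- deriv Q s = deriv g s
  have hEq : Q =ᶠ[nhds s] fun t => (c * b ^ 2 - 1) / t - c * b ^ 2 * t / b ^ 2 :=
    Filter.eventuallyEq_of_mem (hIopen.mem_nhds hs) key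
  have hg : HasDerivAt (fun t : ℝ => (c * b ^ 2 - 1) / t - c * b ^ 2 * t / b ^ 2)
      ((c * b ^ 2 - 1) * -(s ^ 2)⁻¹ - c * b ^ 2 / b ^ 2) s := by
    have h1 := (hasDerivAt_inv hs0.ne').const_mul (c * b ^ 2 - 1)
    have h2 : HasDerivAt (fun t : ℝ => c * b ^ 2 * t / b ^ 2) (c * b ^ 2 / b ^ 2) s := by
      simpa using ((hasDerivAt_id s).const_mul (c * b ^ 2)).div_const (b ^ 2)
    simpa [div_eq_mul_inv, Pi.sub_def] using h1.sub h2
  rw [hEq.deriv_eq, hg.deriv, key s hs]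
  have hs0' : s ≠ 0 := hs0.ne'
  have hbs : b ^ 2 - s ^ 2 ≠ 0 := hsb2.ne'
  field_simp
  ring
end

section
/- Let n ≥ 3 and let (h_{ij}) be a symmetric n×n real matrix of rank at least 2, and (m_i) a nonzero vector with h_{ij} interpreted via a positive definite metric a^{ij} such that a^{ij}h_{ij} = n−1, h_{ij}m^j = m_i, and m² := m_i m^i ≠ 0. If real numbers Φ, Ψ, Ω satisfy Φ(h_{hi}h_{jk}+h_{hj}h_{ik}+h_{hk}h_{ij}) + Ψ(h_{hk}m_im_j + h_{hj}m_im_k + h_{hi}m_jm_k + h_{ij}m_hm_k + h_{jk}m_im_h + h_{ik}m_jm_h) + Ω·m_hm_im_jm_k = 0 for all indices h,i,j,k, then Φ = Ψ = Ω = 0. -/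
open Matrix BigOperators

lemma rank_outer_le_one {n : ℕ} (w v : Fin n → ℝ) :
    (Matrix.of fun i j => w i * v j : Matrix (Fin n) (Fin n) ℝ).rank ≤ 1 := by
  have hle : LinearMap.range (Matrix.of fun i j => w i * v j :
      Matrix (Fin n) (Fin n) ℝ).mulVecLin ≤ Submodule.span ℝ {w} := by
    rintro y ⟨x, rfl⟩
    have : (Matrix.of fun i j => w i * v j : Matrix (Fin n) (Fin n) ℝ).mulVecLin x
        = (∑ j, v j * x j) • w := by
      ext i
      simp [Matrix.mulVecLin, Matrix.mulVec, dotProduct, Finset.mul_sum,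
        Finset.sum_mul, mul_comm, mul_assoc, mul_left_comm]
    rw [this]
    exact Submodule.smul_mem _ _ (Submodule.mem_span_singleton_self w)
  calc (Matrix.of fun i j => w i * v j : Matrix (Fin n) (Fin n) ℝ).rank
      ≤ Module.finrank ℝ (Submodule.span ℝ ({w} : Set (Fin n → ℝ))) :=
        Submodule.finrank_mono hle
    _ ≤ 1 := by
        simpa using finrank_span_le_card ({w} : Set (Fin n → ℝ))

/-- Algebraic core of the T-condition theorem: if the symmetrized combination of `h` and `m`
with coefficients `Φ, Ψ, Ω` vanishes, where `h` is a symmetric matrix of rank at least `2`,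
`m` is nonzero, indices are raised with a positive definite metric `A = (a^{ij})`, with
`a^{ij}h_{ij} = n − 1`, `h_{ij}m^j = m_i` and `m² = m_i m^i ≠ 0`, then `Φ = Ψ = Ω = 0`. -/
theorem stmt10 (n : ℕ) (hn : 3 ≤ n)
    (A : Matrix (Fin n) (Fin n) ℝ) (hA : A.PosDef)
    (h : Matrix (Fin n) (Fin n) ℝ) (hsymm : h.IsSymm) (hrank : 2 ≤ h.rank)
    (m : Fin n → ℝ) (hm : m ≠ 0)
    (M : Fin n → ℝ) (hM : ∀ i, M i = ∑ j, A i j * m j)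
    (htrace : ∑ i, ∑ j, A i j * h i j = (n : ℝ) - 1)
    (hhm : ∀ i, ∑ j, h i j * M j = m i)
    (hm2 : ∑ i, m i * M i ≠ 0)
    (Φ Ψ Ω : ℝ)
    (hT : ∀ i j k l : Fin n,
      Φ * (h i j * h k l + h i k * h j l + h i l * h j k)
        + Ψ * (h i l * m j * m k + h i k * m j * m l + h i j * m k * m l
            + h j k * m i * m l + h k l * m j * m i + h j l * m k * m i)
        + Ω * (m i * m j * m k * m l) = 0) :
    Φ = 0 ∧ Ψ = 0 ∧ Ω = 0 := by
  set s : ℝ := ∑ i, m i * M i with hs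
  -- first contraction with M
  have key : ∀ i j k : Fin n,
      (Φ + s * Ψ) * (h i j * m k + h i k * m j + h j k * m i)
        + (3 * Ψ + s * Ω) * (m i * m j * m k) = 0 := by
    intro i j k
    have h0 : ∑ l, (Φ * (h i j * h k l + h i k * h j l + h i l * h j k)
        + Ψ * (h i l * m j * m k + h i k * m j * m l + h i j * m k * m l
            + h j k * m i * m l + h k l * m j * m i + h j l * m k * m i)
        + Ω * (m i * m j * m k * m l)) * M l = 0 :=
      Finset.sum_eq_zero fun l _ => by rw [hT i j k l, zero_mul]
    have h1 : ∑ l, (Φ * (h i j * h k l + h i k * h j l + h i l * h j k)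
        + Ψ * (h i l * m j * m k + h i k * m j * m l + h i j * m k * m l
            + h j k * m i * m l + h k l * m j * m i + h j l * m k * m i)
        + Ω * (m i * m j * m k * m l)) * M l
        = (Φ + s * Ψ) * (h i j * m k + h i k * m j + h j k * m i)
          + (3 * Ψ + s * Ω) * (m i * m j * m k) := by
      calc _ = ∑ l, ((Φ * h i j) * (h k l * M l) + (Φ * h i k) * (h j l * M l)
              + (Φ * h j k) * (h i l * M l)
              + (Ψ * (m j * m k)) * (h i l * M l)
              + (Ψ * (h i k * m j)) * (m l * M l)
              + (Ψ * (h i j * m k)) * (m l * M l)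
              + (Ψ * (h j k * m i)) * (m l * M l)
              + (Ψ * (m j * m i)) * (h k l * M l)
              + (Ψ * (m k * m i)) * (h j l * M l)
              + (Ω * (m i * m j * m k)) * (m l * M l)) :=
            Finset.sum_congr rfl fun l _ => by ring
        _ = _ := by
            simp only [Finset.sum_add_distrib, ← Finset.mul_sum, hhm, ← hs]
            ring
    linarith [h0, h1]
  -- second contraction with M
  have key2 : ∀ i j : Fin n,
      (Φ + s * Ψ) * (s * h i j + 2 * (m i * m j))
        + (3 * Ψ + s * Ω) * (s * (m i * m j)) = 0 := by
    intro i j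
    have h0 : ∑ k, ((Φ + s * Ψ) * (h i j * m k + h i k * m j + h j k * m i)
        + (3 * Ψ + s * Ω) * (m i * m j * m k)) * M k = 0 :=
      Finset.sum_eq_zero fun k _ => by rw [key i j k, zero_mul]
    have h1 : ∑ k, ((Φ + s * Ψ) * (h i j * m k + h i k * m j + h j k * m i)
        + (3 * Ψ + s * Ω) * (m i * m j * m k)) * M k
        = (Φ + s * Ψ) * (s * h i j + 2 * (m i * m j))
          + (3 * Ψ + s * Ω) * (s * (m i * m j)) := by
      calc _ = ∑ k, (((Φ + s * Ψ) * h i j) * (m k * M k)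
              + ((Φ + s * Ψ) * m j) * (h i k * M k)
              + ((Φ + s * Ψ) * m i) * (h j k * M k)
              + ((3 * Ψ + s * Ω) * (m i * m j)) * (m k * M k)) :=
            Finset.sum_congr rfl fun k _ => by ring
        _ = _ := by
            simp only [Finset.sum_add_distrib, ← Finset.mul_sum, hhm, ← hs]
            ring
    linarith [h0, h1]
  obtain ⟨i₀, hi₀⟩ : ∃ i, m i ≠ 0 := Function.ne_iff.mp hm
  -- α = 0
  have hα : Φ + s * Ψ = 0 := by
    by_contra hα
    set c : ℝ := -((Φ + s * Ψ) * 2 + (3 * Ψ + s * Ω) * s) / ((Φ + s * Ψ) * s) with hc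
    have hne : (Φ + s * Ψ) * s ≠ 0 := mul_ne_zero hα hm2
    have heq : h = Matrix.of (fun i j => (c * m i) * m j) := by
      ext i j
      show h i j = (c * m i) * m j
      rw [hc, div_mul_eq_mul_div, div_mul_eq_mul_div, eq_div_iff hne]
      linear_combination key2 i j
    have hle : h.rank ≤ 1 := heq ▸ rank_outer_le_one _ _
    omega
  have hβ : 3 * Ψ + s * Ω = 0 := by
    have := key2 i₀ i₀
    rw [hα] at this
    have h2 : (3 * Ψ + s * Ω) * (s * (m i₀ * m i₀)) = 0 := by linarith
    rcases mul_eq_zero.mp h2 with h3 | h3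
    · exact h3
    · exact absurd h3 (by positivity)
  -- Φ = 0 via rank ≥ 2 again
  have hΦ : Φ = 0 := by
    by_contra hΦ
    have SymQ : ∀ i j k l : Fin n,
        (s * h i j - m i * m j) * (s * h k l - m k * m l)
          + (s * h i k - m i * m k) * (s * h j l - m j * m l)
          + (s * h i l - m i * m l) * (s * h j k - m j * m k) = 0 := by
      intro i j k l
      have hP : Φ * ((s * h i j - m i * m j) * (s * h k l - m k * m l)
          + (s * h i k - m i * m k) * (s * h j l - m j * m l)
          + (s * h i l - m i * m l) * (s * h j k - m j * m k)) = 0 := by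
        have e := hT i j k l
        linear_combination (s ^ 2) * e
          + (-(s) * (h i l * m j * m k + h i k * m j * m l + h i j * m k * m l
              + h j k * m i * m l + h k l * m j * m i + h j l * m k * m i)
             + 3 * (m i * m j * m k * m l)) * hα
          + (-(s) * (m i * m j * m k * m l)) * hβ
      exact (mul_eq_zero.mp hP).resolve_left hΦ
    have hdiag : ∀ i : Fin n, s * h i i - m i * m i = 0 := by
      intro i
      have := SymQ i i i i
      have h2 : (s * h i i - m i * m i) ^ 2 = 0 := by nlinarith
      exact pow_eq_zero_iff (by norm_num) |>.mp h2
    have hoff : ∀ i k : Fin n, s * h i k - m i * m k = 0 := by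
      intro i k
      have hki : h k i = h i k := by
        have := hsymm
        rw [Matrix.IsSymm] at this
        calc h k i = hᵀ i k := rfl
          _ = h i k := by rw [this]
      have := SymQ i i k k
      have h2 : (s * h i k - m i * m k) ^ 2 = 0 := by
        have d1 := hdiag i
        have d2 := hdiag k
        nlinarith [this, d1, d2]
      exact pow_eq_zero_iff (by norm_num) |>.mp h2
    have heq : h = Matrix.of (fun i j => ((1 / s) * m i) * m j) := by
      ext i j
      show h i j = (1 / s) * m i * m j
      rw [div_mul_eq_mul_div, div_mul_eq_mul_div, eq_div_iff hm2]
      linear_combination hoff i j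
    have hle : h.rank ≤ 1 := heq ▸ rank_outer_le_one _ _
    omega
  have hΨ : Ψ = 0 := by
    rw [hΦ, zero_add] at hα
    exact (mul_eq_zero.mp hα).resolve_left hm2
  have hΩ : Ω = 0 := by
    rw [hΨ, mul_zero, zero_add] at hβ
    exact (mul_eq_zero.mp hβ).resolve_left hm2
  exact ⟨hΦ, hΨ, hΩ⟩
end
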